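/- arXiv:1601.04743 — 2 statements merged into one kernel-verified Lean document; each statement's English description precedes it below -/
import Mathlib

section
/- Let Q be the arithmetization of a quantified Boolean suffix in which each ∃xᵢ is replaced by a sum over xᵢ ∈ {0,1} and each ∀xᵢ by a product over xᵢ ∈ {0,1}, applied to a polynomial P that is {0,1}-valued on Boolean inputs. Then for every Boolean assignment a to the free variables, Q(a) ≠ 0 over ℤ if and only if the quantified Boolean formula is true at a. -/
/-- Arithmetization of a quantifier suffix: each existential quantifier (`q _ = false`)
becomes a sum over {0,1}, each universal quantifier (`q _ = true`) becomes a product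
over {0,1}. -/
def quantEval : (t : ℕ) → (Fin t → Bool) → ((Fin t → Bool) → ℤ) → ℤ
  | 0, _, f => f (fun i => i.elim0)
  | t + 1, q, f =>
    if q 0 then
      quantEval t (fun i => q i.succ) (fun v => f (Fin.cons false v)) *
        quantEval t (fun i => q i.succ) (fun v => f (Fin.cons true v))
    else
      quantEval t (fun i => q i.succ) (fun v => f (Fin.cons false v)) +
        quantEval t (fun i => q i.succ) (fun v => f (Fin.cons true v))

/-- Truth value of a quantified Boolean suffix over a Boolean predicate. -/
def quantTruth : (t : ℕ) → (Fin t → Bool) → ((Fin t → Bool) → Prop) → Prop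
  | 0, _, f => f (fun i => i.elim0)
  | t + 1, q, f =>
    if q 0 then
      quantTruth t (fun i => q i.succ) (fun v => f (Fin.cons false v)) ∧
        quantTruth t (fun i => q i.succ) (fun v => f (Fin.cons true v))
    else
      quantTruth t (fun i => q i.succ) (fun v => f (Fin.cons false v)) ∨
        quantTruth t (fun i => q i.succ) (fun v => f (Fin.cons true v))

lemma quant_key : ∀ (t : ℕ) (q : Fin t → Bool) (f : (Fin t → Bool) → ℤ),
    (∀ v, f v = 0 ∨ f v = 1) →
    0 ≤ quantEval t q f ∧ (quantEval t q f ≠ 0 ↔ quantTruth t q (fun v => f v = 1))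
  | 0, q, f, hf => by
    simp only [quantEval, quantTruth]
    rcases hf (fun i => i.elim0) with h | h <;> simp [h]
  | t + 1, q, f, hf => by
    obtain ⟨h0f, h0⟩ := quant_key t (fun i => q i.succ) (fun v => f (Fin.cons false v))
      (fun v => hf _)
    obtain ⟨h1f, h1⟩ := quant_key t (fun i => q i.succ) (fun v => f (Fin.cons true v))
      (fun v => hf _)
    simp only [quantEval, quantTruth]
    by_cases hq : q 0 = true <;> simp only [hq, if_true, if_false, Bool.false_eq_true]
    · constructor
      · exact mul_nonneg h0f h1f
      · rw [mul_ne_zero_iff, h0, h1]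
    · constructor
      · exact add_nonneg h0f h1f
      · rw [← h0, ← h1]
        omega

theorem stmt_15 (m t : ℕ) (P : MvPolynomial (Fin (m + t)) ℤ)
    (hP : ∀ b : Fin (m + t) → Bool,
      MvPolynomial.eval (fun i => if b i then (1 : ℤ) else 0) P = 0 ∨
      MvPolynomial.eval (fun i => if b i then (1 : ℤ) else 0) P = 1)
    (q : Fin t → Bool) (a : Fin m → Bool) :
    quantEval t q (fun v =>
        MvPolynomial.eval (fun i => if Fin.append a v i then (1 : ℤ) else 0) P) ≠ 0
      ↔
    quantTruth t q (fun v =>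
        MvPolynomial.eval (fun i => if Fin.append a v i then (1 : ℤ) else 0) P = 1) := by
  exact (quant_key t q _ (fun v => hP (Fin.append a v))).2
end

section
/- Ryser's formula: for an n×n matrix M over a commutative ring, the permanent of M equals Σ over S ⊆ [n] of (−1)^{n−|S|} ∏_{i=1}^n ( Σ_{j ∈ S} M[i][j] ). -/
open Finset

lemma aux_pow (R : Type*) [CommRing R] {α : Type*} [DecidableEq α] (x : Finset α) :
    (∑ m ∈ x.powerset, (-1 : R) ^ m.card) = if x = ∅ then 1 else 0 := by
  have h := Finset.sum_powerset_neg_one_pow_card (x := x)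
  have h2 : ((∑ m ∈ x.powerset, (-1 : ℤ) ^ m.card : ℤ) : R)
      = ((if x = ∅ then 1 else 0 : ℤ) : R) := by rw [h]
  push_cast at h2
  simpa using h2

lemma aux_sign (R : Type*) [CommRing R] (n : ℕ) (T : Finset (Fin n)) :
    (∑ S : Finset (Fin n), if T ⊆ S then (-1 : R) ^ (n - S.card) else 0)
      = if T = univ then 1 else 0 := by
  have h1 : (∑ S : Finset (Fin n), if T ⊆ S then (-1 : R) ^ (n - S.card) else 0)
      = ∑ S : Finset (Fin n), if T ⊆ Sᶜ then (-1 : R) ^ (n - Sᶜ.card) else 0 :=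
    (Fintype.sum_bijective _ (Function.Involutive.bijective compl_involutive) _ _
      (fun S => by simp)).symm
  rw [h1]
  have h2 : ∀ S : Finset (Fin n), (n - Sᶜ.card) = S.card := by
    intro S
    have := Finset.card_le_univ S
    simp only [Fintype.card_fin] at this
    rw [Finset.card_compl, Fintype.card_fin]
    omega
  simp_rw [h2]
  calc (∑ S : Finset (Fin n), if T ⊆ Sᶜ then (-1 : R) ^ S.card else 0)
      = ∑ S ∈ Tᶜ.powerset, (-1 : R) ^ S.card := by
        rw [← Finset.sum_filter]
        apply Finset.sum_congr _ (fun _ _ => rfl)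
        ext S
        rw [Finset.mem_filter, Finset.mem_powerset, ← Finset.compl_subset_compl, compl_compl]
        simp [Finset.subset_compl_comm]
    _ = if T = univ then 1 else 0 := by
        rw [aux_pow]
        congr 1
        rw [eq_iff_iff, Finset.compl_eq_empty_iff]

theorem stmt_17 (R : Type*) [CommRing R] (n : ℕ) (M : Matrix (Fin n) (Fin n) R) :
    (∑ σ : Equiv.Perm (Fin n), ∏ i, M i (σ i))
      = ∑ S : Finset (Fin n), (-1 : R) ^ (n - S.card) * ∏ i, ∑ j ∈ S, M i j := by
  simp_rw [Finset.prod_univ_sum (f := fun i j => M i j), Finset.mul_sum]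
  have key : ∀ S : Finset (Fin n),
      ∑ x ∈ Fintype.piFinset (fun _ : Fin n => S), (-1:R) ^ (n - S.card) * ∏ i, M i (x i)
        = ∑ f : Fin n → Fin n,
            (if ∀ i, f i ∈ S then (-1:R) ^ (n - S.card) else 0) * ∏ i, M i (f i) := by
    intro S
    simp_rw [ite_mul, zero_mul, ← Finset.sum_filter]
    apply Finset.sum_congr _ (fun _ _ => rfl)
    ext f
    simp [Fintype.mem_piFinset]
  simp_rw [key]
  rw [Finset.sum_comm]
  have key2 : ∀ f : Fin n → Fin n,
      ∑ S : Finset (Fin n), (if ∀ i, f i ∈ S then (-1:R) ^ (n - S.card) else 0) * ∏ i, M i (f i)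
        = (if Function.Bijective f then 1 else 0) * ∏ i, M i (f i) := by
    intro f
    rw [← Finset.sum_mul]
    congr 1
    have h : ∀ S : Finset (Fin n), (∀ i, f i ∈ S) ↔ Finset.image f univ ⊆ S := by
      intro S; simp [Finset.image_subset_iff]
    simp_rw [h]
    rw [aux_sign]
    congr 1
    rw [eq_iff_iff]
    constructor
    · intro hu
      have hsurj : Function.Surjective f := by
        intro y
        have : y ∈ Finset.image f univ := by rw [hu]; exact Finset.mem_univ y
        simpa using this
      exact Finite.surjective_iff_bijective.mp hsurj
    · intro hb
      apply Finset.eq_univ_of_forall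
      intro y
      obtain ⟨x, hx⟩ := hb.2 y
      exact Finset.mem_image.mpr ⟨x, Finset.mem_univ x, hx⟩
  simp_rw [key2, ite_mul, zero_mul, one_mul, ← Finset.sum_filter]
  refine Finset.sum_bij (fun (σ : Equiv.Perm (Fin n)) _ => ⇑σ) ?_ ?_ ?_ ?_
  · intro σ _
    exact Finset.mem_filter.mpr ⟨Finset.mem_univ _, σ.bijective⟩
  · intro σ _ τ _ h
    exact Equiv.coe_fn_injective h
  · intro f hf
    have hb : Function.Bijective f := (Finset.mem_filter.mp hf).2
    exact ⟨Equiv.ofBijective f hb, Finset.mem_univ _, rfl⟩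
  · intro σ _; rfl
end
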